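/- Let k be a nonzero rational number, and for n ≥ 1 set β_n = b·hⁿ − n·k·f·g·h^{n−1} ∈ Λ_A. Then the graded ℚ-algebra H(Λ_A, d) is isomorphic to ℚ[a]/(a²) ⊗ (ℚ ⊕ M), where a has degree 2, M is the graded ℚ-vector space with basis consisting of one element in degree 2 (the class of b), one element in degree 4n+3 for each n ≥ 0 (the class of g·hⁿ), and one element in degree 4n+2 for each n ≥ 1 (the class of β_n), and ℚ ⊕ M is the square-zero extension of ℚ by M (i.e. the product of any two elements of M is zero). In particular the classes of a, b, g·hⁿ (n ≥ 0) and β_n (n ≥ 1) generate H(Λ_A,d) as a ℚ-algebra, and in H(Λ_A,d) the relations [a]² = 0, [b]² = 0, [b][g] = 0 hold. (This is the paper's presentation H^*(Im Emb_ω(c,μ); ℚ) = Λ(a,b,g, ghⁿ, bhⁿ)/⟨a², b², bg⟩.) -/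

import Mathlib

/-!
Statement 2: the cohomology algebra `H(Λ_A, d)` is isomorphic, as a graded ℚ-algebra, to
`ℚ[a]/(a²) ⊗ (ℚ ⊕ M)`, where `M` has basis the class of `b` (degree 2), the classes of
`g·hⁿ` (degree 4n+3, n ≥ 0) and the classes of `βₙ = b·hⁿ − n·k·f·g·h^{n−1}` (degree 4n+2,
n ≥ 1), and `ℚ ⊕ M` is the square-zero extension.  This is encoded as: the elements
`a^ε · m` (ε ∈ {0,1}, m ∈ {1} ∪ {basis of M}) are homogeneous cocycles whose classes form a
basis of the cohomology, the products of any two of `b, g·hⁿ, βₙ` are coboundaries, and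
`a² , b², b·g` are coboundaries (the relations `[a]² = [b]² = [b][g] = 0`).
-/

/-- The monomial `∏ᵢ ev i ^ p i · ∏ᵢ od i ^ ε i` (odd generators taken in canonical order). -/
def gcMon {A : Type*} [Ring A] {nE nO : ℕ} (ev : Fin nE → A) (od : Fin nO → A) :
    ((Fin nE → ℕ) × (Fin nO → Bool)) → A :=
  fun m => (List.ofFn fun i => ev i ^ m.1 i).prod *
    (List.ofFn fun i => if m.2 i then od i else 1).prod

/-- The degree of a monomial, given the degrees of the generators. -/
def gcDeg {nE nO : ℕ} (dE : Fin nE → ℕ) (dO : Fin nO → ℕ) :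
    ((Fin nE → ℕ) × (Fin nO → Bool)) → ℕ :=
  fun m => (∑ i, dE i * m.1 i) + ∑ i, (if m.2 i then dO i else 0)

/-- The degree-`m` homogeneous component: the span of the monomials of degree `m`. -/
def gcGrade {A : Type*} [Ring A] [Algebra ℚ A] {nE nO : ℕ}
    (ev : Fin nE → A) (od : Fin nO → A) (dE : Fin nE → ℕ) (dO : Fin nO → ℕ) (m : ℕ) :
    Submodule ℚ A :=
  Submodule.span ℚ (gcMon ev od '' {x | gcDeg dE dO x = m})

/-- `A` is the free graded-commutative ℚ-algebra on even generators `ev` (central) and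
odd generators `od` (pairwise anticommuting, squaring to zero): the monomials form a basis. -/
structure IsFreeGCA {A : Type*} [Ring A] [Algebra ℚ A] {nE nO : ℕ}
    (ev : Fin nE → A) (od : Fin nO → A) : Prop where
  li : LinearIndependent ℚ (gcMon ev od)
  spanning : Submodule.span ℚ (Set.range (gcMon ev od)) = ⊤
  central : ∀ i x, Commute (ev i) x
  anticomm : ∀ i j, od i * od j = -(od j * od i)

/-- The grading of `Λ_A`: `a, b` have degree 2, `e, f, g` degree 3 and `h` degree 4. -/
def gradeLA {A : Type*} [Ring A] [Algebra ℚ A] (a b e f g h : A) : ℕ → Submodule ℚ A :=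
  gcGrade ![a, b, h] ![e, f, g] ![2, 2, 4] ![3, 3, 3]

/-- Index of the basis of `M`: the class of `b`; the classes of `g·hⁿ` (n ≥ 0); and the
classes of `β_{m+1}` (m ≥ 0). -/
abbrev idxM : Type := Unit ⊕ ℕ ⊕ ℕ

/-- Representatives of the basis of `M`: `b`, `g·hⁿ`, and
`β_{m+1} = b·h^{m+1} − (m+1)·k·f·g·hᵐ`. -/
def mEltA {A : Type*} [Ring A] [Algebra ℚ A] (b f g h : A) (k : ℚ) : idxM → A
  | Sum.inl _ => b
  | Sum.inr (Sum.inl n) => g * h ^ n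
  | Sum.inr (Sum.inr m) => b * h ^ (m + 1) - (((m : ℚ) + 1) * k) • (f * (g * h ^ m))

/-- Degrees of the basis elements of `M`. -/
def degMA : idxM → ℕ
  | Sum.inl _ => 2
  | Sum.inr (Sum.inl n) => 4 * n + 3
  | Sum.inr (Sum.inr m) => 4 * (m + 1) + 2

/-- Representatives of the basis of `ℚ[a]/(a²) ⊗ (ℚ ⊕ M)`: the elements `a^ε · m` with
`ε ∈ {0,1}` and `m` either `1` or a basis element of `M`. -/
def cEltA {A : Type*} [Ring A] [Algebra ℚ A] (a b f g h : A) (k : ℚ) :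
    Bool × Option idxM → A :=
  fun p => (if p.1 then a else 1) * (Option.elim p.2 1 (mEltA b f g h k))

/-- Degrees of the basis of `ℚ[a]/(a²) ⊗ (ℚ ⊕ M)`. -/
def degCA : Bool × Option idxM → ℕ :=
  fun p => (if p.1 then 2 else 0) + Option.elim p.2 0 degMA

structure Setup (A : Type*) [Ring A] [Algebra ℚ A] where
  a : A
  b : A
  e : A
  f : A
  g : A
  h : A
  k : ℚ
  hk : k ≠ 0
  d : A →ₗ[ℚ] A
  hfree : IsFreeGCA ![a, b, h] ![e, f, g]
  hleib : ∀ (m : ℕ) (x y : A), x ∈ gradeLA a b e f g h m →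
      d (x * y) = d x * y + ((-1 : ℚ) ^ m) • (x * d y)
  hda : d a = 0
  hdb : d b = 0
  hdg : d g = 0
  hde : d e = a * a
  hdf : d f = b * b
  hdh : d h = k • (b * g)

namespace Setup

variable {A : Type*} [Ring A] [Algebra ℚ A] (C : Setup A)

/-- the odd word -/
def oddw (u v w : Bool) : A :=
  (if u then C.e else 1) * ((if v then C.f else 1) * (if w then C.g else 1))

/-- normal monomial -/
def nm (p q r : ℕ) (u v w : Bool) : A :=
  C.a ^ p * (C.b ^ q * (C.h ^ r * C.oddw u v w))

lemma half {x : A} (hx : x + x = 0) : x = 0 := by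
  have h2 : (2 : ℚ) • x = 0 := by rw [two_smul]; exact hx
  calc x = (2⁻¹ : ℚ) • ((2 : ℚ) • x) := by rw [smul_smul]; norm_num
  _ = 0 := by rw [h2, smul_zero]

lemma ca : ∀ x, Commute C.a x := by have := C.hfree.central 0; simpa using this
lemma cb : ∀ x, Commute C.b x := by have := C.hfree.central 1; simpa using this
lemma ch : ∀ x, Commute C.h x := by have := C.hfree.central 2; simpa using this

lemma anti_ef : C.e * C.f = -(C.f * C.e) := by have := C.hfree.anticomm 0 1; simpa using this
lemma anti_eg : C.e * C.g = -(C.g * C.e) := by have := C.hfree.anticomm 0 2; simpa using this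
lemma anti_fg : C.f * C.g = -(C.g * C.f) := by have := C.hfree.anticomm 1 2; simpa using this

lemma ee : C.e * C.e = 0 := by
  have := C.hfree.anticomm 0 0; simp only [Matrix.cons_val_zero] at this
  exact half (by nth_rewrite 1 [this]; exact neg_add_cancel _)
lemma ff : C.f * C.f = 0 := by
  have := C.hfree.anticomm 1 1
  simp only [Matrix.cons_val_one, Matrix.head_cons, Matrix.cons_val_zero] at this
  exact half (by nth_rewrite 1 [this]; exact neg_add_cancel _)
lemma gg : C.g * C.g = 0 := by
  have := C.hfree.anticomm 2 2
  have this2 : (![C.e, C.f, C.g] 2 : A) = C.g := by simp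
  rw [this2] at this
  exact half (by nth_rewrite 1 [this]; exact neg_add_cancel _)

lemma gcMon_eq (p q r : ℕ) (u v w : Bool) :
    gcMon ![C.a, C.b, C.h] ![C.e, C.f, C.g] (![p, q, r], ![u, v, w]) = C.nm p q r u v w := by
  cases u <;> cases v <;> cases w <;> simp [gcMon, List.ofFn_succ, nm, oddw, mul_assoc]

lemma vec3_eta {α : Type*} (v : Fin 3 → α) : v = ![v 0, v 1, v 2] := by
  funext i; fin_cases i <;> simp

lemma gcDeg_eq (p q r : ℕ) (u v w : Bool) :
    gcDeg ![2,2,4] ![3,3,3] (![p, q, r], ![u, v, w]) =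
      2*p + 2*q + 4*r + (cond u 3 0) + (cond v 3 0) + (cond w 3 0) := by
  cases u <;> cases v <;> cases w <;>
    simp [gcDeg, Fin.sum_univ_three]

lemma nm_mem {p q r : ℕ} {u v w : Bool} {n : ℕ}
    (hσ : 2*p + 2*q + 4*r + (cond u 3 0) + (cond v 3 0) + (cond w 3 0) = n) :
    C.nm p q r u v w ∈ gradeLA C.a C.b C.e C.f C.g C.h n := by
  rw [gradeLA, gcGrade]
  exact Submodule.subset_span ⟨(![p,q,r], ![u,v,w]), by rw [Set.mem_setOf, gcDeg_eq, hσ],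
    C.gcMon_eq p q r u v w⟩



/-! basic membership lemmas -/

lemma mem_one : (1:A) ∈ gradeLA C.a C.b C.e C.f C.g C.h 0 := by
  have := C.nm_mem (p:=0) (q:=0) (r:=0) (u:=false) (v:=false) (w:=false) (n:=0) (by simp)
  simpa [nm, oddw] using this

lemma mem_a : C.a ∈ gradeLA C.a C.b C.e C.f C.g C.h 2 := by
  have := C.nm_mem (p:=1) (q:=0) (r:=0) (u:=false) (v:=false) (w:=false) (n:=2) (by simp)
  simpa [nm, oddw] using this

lemma mem_e : C.e ∈ gradeLA C.a C.b C.e C.f C.g C.h 3 := by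
  have := C.nm_mem (p:=0) (q:=0) (r:=0) (u:=true) (v:=false) (w:=false) (n:=3) (by simp)
  simpa [nm, oddw] using this

lemma mem_f : C.f ∈ gradeLA C.a C.b C.e C.f C.g C.h 3 := by
  have := C.nm_mem (p:=0) (q:=0) (r:=0) (u:=false) (v:=true) (w:=false) (n:=3) (by simp)
  simpa [nm, oddw] using this

lemma mem_h : C.h ∈ gradeLA C.a C.b C.e C.f C.g C.h 4 := by
  have := C.nm_mem (p:=0) (q:=0) (r:=1) (u:=false) (v:=false) (w:=false) (n:=4) (by simp)
  simpa [nm, oddw] using this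

lemma mem_apow (p : ℕ) : C.a^p ∈ gradeLA C.a C.b C.e C.f C.g C.h (2*p) := by
  have := C.nm_mem (p:=p) (q:=0) (r:=0) (u:=false) (v:=false) (w:=false) (n:=2*p) (by simp)
  simpa [nm, oddw] using this

lemma mem_bpow (q : ℕ) : C.b^q ∈ gradeLA C.a C.b C.e C.f C.g C.h (2*q) := by
  have := C.nm_mem (p:=0) (q:=q) (r:=0) (u:=false) (v:=false) (w:=false) (n:=2*q) (by simp)
  simpa [nm, oddw] using this

lemma mem_hpow (r : ℕ) : C.h^r ∈ gradeLA C.a C.b C.e C.f C.g C.h (2*(2*r)) := by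
  have := C.nm_mem (p:=0) (q:=0) (r:=r) (u:=false) (v:=false) (w:=false) (n:=2*(2*r)) (by show 2*0+2*0+4*r+0+0+0 = 2*(2*r); ring)
  simpa [nm, oddw] using this

/-! basic d computations -/

lemma d_one : C.d 1 = 0 := by
  have := C.hleib 0 1 1 C.mem_one
  simp only [mul_one, pow_zero, one_smul, one_mul] at this
  exact (add_eq_left.mp this.symm)

lemma dmulC (m : ℕ) (z x : A) (hz : z ∈ gradeLA C.a C.b C.e C.f C.g C.h (2*m))
    (hdz : C.d z = 0) : C.d (z*x) = z * C.d x := by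
  rw [C.hleib (2*m) z x hz, hdz, zero_mul, zero_add, pow_mul, neg_one_sq, one_pow, one_smul]

lemma d_apow (p : ℕ) : C.d (C.a^p) = 0 := by
  induction p with
  | zero => simpa using C.d_one
  | succ n ih =>
      rw [pow_succ', C.dmulC 1 C.a _ (by simpa using C.mem_a) C.hda, ih, mul_zero]

lemma mem_b : C.b ∈ gradeLA C.a C.b C.e C.f C.g C.h 2 := by
  have := C.nm_mem (p:=0) (q:=1) (r:=0) (u:=false) (v:=false) (w:=false) (n:=2) (by simp)
  simpa [nm, oddw] using this

lemma d_bpow (q : ℕ) : C.d (C.b^q) = 0 := by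
  induction q with
  | zero => simpa using C.d_one
  | succ n ih =>
      rw [pow_succ', C.dmulC 1 C.b _ (by simpa using C.mem_b) C.hdb, ih, mul_zero]

lemma d_hpow (r : ℕ) : C.d (C.h^(r+1)) = (((r:ℚ)+1) * C.k) • (C.b * (C.g * C.h^r)) := by
  induction r with
  | zero =>
      simpa [mul_comm] using C.hdh
  | succ n ih =>
      rw [pow_succ' C.h (n+1), C.hleib 4 C.h _ (by simpa using C.mem_h), C.hdh, ih]
      have h1 : ((-1:ℚ))^4 = 1 := by norm_num
      rw [h1, one_smul, smul_mul_assoc, mul_smul_comm]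
      have h2 : C.h * (C.b * (C.g * C.h ^ n)) = C.b * (C.g * C.h^(n+1)) := by
        rw [((C.cb C.h).symm).left_comm, (C.ch C.g).left_comm]
        rw [← pow_succ']
      have h3 : (C.b * C.g) * C.h^(n+1) = C.b * (C.g * C.h^(n+1)) := mul_assoc _ _ _
      rw [h2, h3, ← add_smul]
      congr 1
      push_cast
      ring

lemma ge : C.g * C.e = -(C.e * C.g) := by rw [C.anti_eg, neg_neg]
lemma gf : C.g * C.f = -(C.f * C.g) := by rw [C.anti_fg, neg_neg]

lemma gfg : C.g * (C.f * C.g) = 0 := by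
  rw [← mul_assoc, C.gf, neg_mul, mul_assoc, C.gg, mul_zero, neg_zero]

lemma g_oddw_t (u v : Bool) : C.g * C.oddw u v true = 0 := by
  cases u <;> cases v <;>
    simp only [oddw, Bool.false_eq_true, if_true, if_false, one_mul, mul_one, if_neg]
  · exact C.gg
  · exact C.gfg
  · rw [← mul_assoc, C.ge, neg_mul, mul_assoc, C.gg, mul_zero, neg_zero]
  · rw [← mul_assoc, C.ge, neg_mul, mul_assoc, C.gfg, mul_zero, neg_zero]

lemma g_oddw_f (u v : Bool) : C.g * C.oddw u v false
    = ((-1:ℚ)^(cond u 1 0 + cond v 1 0)) • C.oddw u v true := by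
  cases u <;> cases v <;>
    simp only [oddw, Bool.false_eq_true, if_true, if_false, one_mul, mul_one, cond]
  · simp
  · rw [C.gf]; simp
  · rw [C.ge]; simp
  · rw [← mul_assoc, C.ge, neg_mul, mul_assoc, C.gf, mul_neg, neg_neg]
    norm_num

lemma d_oddw (u v w : Bool) : C.d (C.oddw u v w) =
    (cond u (C.a*C.a*(C.oddw false v w)) 0)
    + (cond v (((-1:ℚ)^(cond u 1 0)) • (C.b*C.b*(C.oddw u false w))) 0) := by
  have h3 : ((-1:ℚ))^3 = -1 := by norm_num
  have hbbe : C.e * (C.b*C.b) = C.b*C.b*C.e := ((C.cb C.e).mul_left (C.cb C.e)).symm.eq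
  cases u <;> cases v <;> cases w <;>
    simp only [oddw, Bool.false_eq_true, if_true, if_false, one_mul, mul_one, cond]
  · simpa using C.d_one
  · simpa using C.hdg
  · simpa using C.hdf
  · rw [C.hleib 3 C.f C.g C.mem_f, C.hdf, C.hdg, mul_zero, smul_zero, add_zero]
    simp
  · simpa using C.hde
  · rw [C.hleib 3 C.e C.g C.mem_e, C.hde, C.hdg, mul_zero, smul_zero]
  · rw [C.hleib 3 C.e C.f C.mem_e, C.hde, C.hdf, h3, hbbe]
    norm_num
  · rw [C.hleib 3 C.e _ C.mem_e, C.hde, h3]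
    rw [C.hleib 3 C.f C.g C.mem_f, C.hdf, C.hdg, mul_zero, smul_zero, add_zero]
    rw [← mul_assoc C.e, hbbe, mul_assoc, mul_assoc]
    norm_num [mul_assoc]

lemma pullA (p q r : ℕ) (X : A) :
    C.a^p * (C.b^q * (C.h^r * (C.a*C.a*X))) = C.a^(p+2) * (C.b^q * (C.h^r * X)) := by
  rw [mul_assoc C.a C.a X, ((C.ca (C.h^r)).symm).left_comm, ((C.ca (C.b^q)).symm).left_comm,
    ((C.ca (C.h^r)).symm).left_comm, ((C.ca (C.b^q)).symm).left_comm,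
    ← mul_assoc (C.a^p), ← mul_assoc (C.a^p * C.a), ← pow_succ, ← pow_succ]

lemma pullB (p q r : ℕ) (X : A) :
    C.a^p * (C.b^q * (C.h^r * (C.b*C.b*X))) = C.a^p * (C.b^(q+2) * (C.h^r * X)) := by
  rw [mul_assoc C.b C.b X, ((C.cb (C.h^r)).symm).left_comm, ((C.cb (C.h^r)).symm).left_comm,
    ← mul_assoc (C.b^q), ← mul_assoc (C.b^q * C.b), ← pow_succ, ← pow_succ]

lemma pullA0 (p q : ℕ) (X : A) :
    C.a^p * (C.b^q * (C.a*(C.a*X))) = C.a^(p+2) * (C.b^q * X) := by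
  rw [((C.ca (C.b^q)).symm).left_comm, ((C.ca (C.b^q)).symm).left_comm,
    ← mul_assoc (C.a^p), ← mul_assoc (C.a^p * C.a), ← pow_succ, ← pow_succ]

lemma pullB0 (p q : ℕ) (X : A) :
    C.a^p * (C.b^q * (C.b*(C.b*X))) = C.a^p * (C.b^(q+2) * X) := by
  rw [← mul_assoc (C.b^q), ← mul_assoc (C.b^q * C.b), ← pow_succ, ← pow_succ]

lemma pullB1 (p q r : ℕ) (X : A) :
    C.a^p * (C.b^q * (C.b*(C.h^r * X))) = C.a^p * (C.b^(q+1) * (C.h^r * X)) := by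
  rw [← mul_assoc (C.b^q), ← pow_succ]

/-- the `h`-differentiation term of `d` on a normal monomial -/
def hterm (p q : ℕ) : ℕ → Bool → Bool → Bool → A
  | 0, _, _, _ => 0
  | r'+1, u, v, w =>
      cond w 0 ((((r':ℚ)+1) * C.k * (-1)^(cond u 1 0 + cond v 1 0)) • C.nm p (q+1) r' u v true)

/-- value of `d` on the normal monomials -/
def dval (p q r : ℕ) (u v w : Bool) : A :=
  (cond u (C.nm (p+2) q r false v w) 0)
  + (cond v (((-1:ℚ)^(cond u 1 0)) • C.nm p (q+2) r u false w) 0)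
  + C.hterm p q r u v w

lemma d_nm_step (p q r : ℕ) (u v w : Bool) :
    C.d (C.nm p q r u v w)
      = C.a^p * (C.b^q * (C.d (C.h^r) * C.oddw u v w + C.h^r * C.d (C.oddw u v w))) := by
  rw [nm, C.dmulC p _ _ (C.mem_apow p) (C.d_apow p),
    C.dmulC q _ _ (C.mem_bpow q) (C.d_bpow q),
    C.hleib (2*(2*r)) _ _ (C.mem_hpow r)]
  rw [pow_mul, neg_one_sq, one_pow, one_smul]

theorem d_nm (p q r : ℕ) (u v w : Bool) :
    C.d (C.nm p q r u v w) = C.dval p q r u v w := by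
  have hgh : ∀ s : ℕ, C.g * C.h^s = C.h^s * C.g := fun s => (((C.ch C.g).symm).pow_right s).eq
  rw [C.d_nm_step, C.d_oddw]
  cases r with
  | zero =>
      have h0 : C.d (C.h^0) = 0 := by rw [pow_zero]; exact C.d_one
      rw [h0, zero_mul, zero_add, dval]
      cases u <;> cases v <;>
        simp only [hterm, Bool.cond_true, Bool.cond_false, mul_add, mul_smul_comm, smul_smul,
          nm, mul_zero, add_zero, zero_add, pow_zero, pow_one, one_mul, mul_one, mul_assoc,
          C.pullA0, C.pullB0, one_smul, neg_smul, smul_neg, mul_neg, neg_mul, neg_neg] <;>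
        module
  | succ r' =>
      rw [C.d_hpow r', smul_mul_assoc, mul_assoc C.b, hgh, mul_assoc (C.h^r')]
      cases w with
      | true =>
          rw [C.g_oddw_t, mul_zero, mul_zero, smul_zero, zero_add, dval]
          cases u <;> cases v <;>
            simp only [hterm, Bool.cond_true, Bool.cond_false, mul_add, mul_smul_comm,
              smul_smul, C.pullA, C.pullB, nm, mul_zero, add_zero, zero_add, pow_zero, pow_one,
              one_smul, neg_smul, smul_neg, mul_neg, neg_mul, neg_neg] <;>
            module
      | false =>
          rw [C.g_oddw_f, dval]
          cases u <;> cases v <;>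
            simp only [hterm, Bool.cond_true, Bool.cond_false, mul_add, mul_smul_comm,
              smul_smul, C.pullA, C.pullB, C.pullB1, nm, mul_zero, add_zero, zero_add,
              pow_zero, pow_one, one_smul, neg_smul, smul_neg, mul_neg, neg_mul, neg_neg] <;>
            module

/-! ## The basis of monomials, the projection `Pi` and the homotopy `S` -/

def tupEquiv : ((ℕ×ℕ×ℕ)×(Bool×Bool×Bool)) ≃ ((Fin 3 → ℕ) × (Fin 3 → Bool)) where
  toFun t := (![t.1.1, t.1.2.1, t.1.2.2], ![t.2.1, t.2.2.1, t.2.2.2])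
  invFun m := ((m.1 0, m.1 1, m.1 2), (m.2 0, m.2 1, m.2 2))
  left_inv t := rfl
  right_inv m := by
    obtain ⟨v, e⟩ := m
    simp only [Prod.mk.injEq]
    constructor
    · exact (Setup.vec3_eta v).symm ▸ rfl
    · exact (Setup.vec3_eta e).symm ▸ rfl

noncomputable def bas : Module.Basis ((ℕ×ℕ×ℕ)×(Bool×Bool×Bool)) ℚ A :=
  (Module.Basis.mk C.hfree.li (by rw [C.hfree.spanning])).reindex tupEquiv.symm

lemma bas_eq (p q r : ℕ) (u v w : Bool) :
    C.bas ((p,q,r),(u,v,w)) = C.nm p q r u v w := by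
  rw [bas, Module.Basis.reindex_apply, Module.Basis.mk_apply]
  exact C.gcMon_eq p q r u v w

/-- harmonic projection on the `Λ(b,h,f,g)` factor -/
def p2val : ℕ → ℕ → Bool → Bool → A
  | _, _, true, _ => 0
  | 0, 0, false, false => 1
  | 0, _+1, false, false => 0
  | 1, 0, false, false => C.nm 0 1 0 false false false
  | 1, r'+1, false, false =>
      C.nm 0 1 (r'+1) false false false - (((r':ℚ)+1) * C.k) • C.nm 0 0 r' false true true
  | _+2, _, false, false => 0
  | 0, r, false, true => C.nm 0 0 r false false true
  | _+1, _, false, true => 0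

/-- harmonic projection values on monomials -/
def pival : ℕ → ℕ → ℕ → Bool → Bool → Bool → A
  | _, _, _, true, _, _ => 0
  | 0, q, r, false, v, w => C.p2val q r v w
  | 1, q, r, false, v, w => C.a * C.p2val q r v w
  | _+2, _, _, false, _, _ => 0

/-- homotopy on the `Λ(b,h,f,g)` factor -/
def s2val : ℕ → ℕ → Bool → Bool → A
  | _, _, true, _ => 0
  | q''+2, r, false, false => C.nm 0 q'' r false true false
  | 1, r, false, true => ((C.k * ((r:ℚ)+1))⁻¹) • C.nm 0 0 (r+1) false false false
  | q''+2, r, false, true => C.nm 0 q'' r false true true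
  | _, _, false, _ => 0

/-- homotopy values on monomials -/
def sival : ℕ → ℕ → ℕ → Bool → Bool → Bool → A
  | _, _, _, true, _, _ => 0
  | p''+2, q, r, false, v, w => C.nm p'' q r true v w
  | 0, q, r, false, v, w => C.s2val q r v w
  | 1, q, r, false, v, w => C.a * C.s2val q r v w

noncomputable def Pi : A →ₗ[ℚ] A :=
  C.bas.constr ℚ (fun t => C.pival t.1.1 t.1.2.1 t.1.2.2 t.2.1 t.2.2.1 t.2.2.2)

noncomputable def S : A →ₗ[ℚ] A :=
  C.bas.constr ℚ (fun t => C.sival t.1.1 t.1.2.1 t.1.2.2 t.2.1 t.2.2.1 t.2.2.2)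

@[simp] lemma Pi_nm (p q r : ℕ) (u v w : Bool) :
    C.Pi (C.nm p q r u v w) = C.pival p q r u v w := by
  rw [← C.bas_eq, Pi, Module.Basis.constr_basis]

@[simp] lemma S_nm (p q r : ℕ) (u v w : Bool) :
    C.S (C.nm p q r u v w) = C.sival p q r u v w := by
  rw [← C.bas_eq, S, Module.Basis.constr_basis]

lemma Pi_d (x : A) : C.Pi (C.d x) = 0 := by
  have key : (C.Pi ∘ₗ C.d) = 0 := by
    apply C.bas.ext
    rintro ⟨⟨p, q, r⟩, u, v, w⟩
    rw [LinearMap.comp_apply, C.bas_eq, C.d_nm, dval, LinearMap.zero_apply]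
    rcases r with _ | r <;> rcases p with _ | _ | p <;> cases u <;> cases v <;> cases w <;>
      simp [hterm, pival, p2val]
  calc C.Pi (C.d x) = (C.Pi ∘ₗ C.d) x := rfl
  _ = 0 := by rw [key]; rfl

lemma smul_one_cancel' {R M : Type*} [Field R] [AddCommGroup M] [Module R M]
    {s t : R} (hst : s*t = 1) (x : M) : s • t • x = x := by
  rw [smul_smul, hst, one_smul]

@[simp] lemma nat_pp1 (n : ℕ) : n+1+1 = n+2 := rfl
@[simp] lemma nat_pp2 (n : ℕ) : n+2+1 = n+3 := rfl
@[simp] lemma nat_pp3 (n : ℕ) : n+2+2 = n+4 := rfl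
@[simp] lemma nat_pp4 (n : ℕ) : n+3+1 = n+4 := rfl

@[simp] lemma a_nm (p q r : ℕ) (u v w : Bool) :
    C.a * C.nm p q r u v w = C.nm (p+1) q r u v w := by
  rw [nm, nm, ← mul_assoc, ← pow_succ']

set_option maxHeartbeats 2000000 in
lemma homotopy_basis (p q r : ℕ) (u v w : Bool) :
    C.nm p q r u v w - C.pival p q r u v w
      = C.d (C.sival p q r u v w) + C.S (C.dval p q r u v w) := by
  rcases p with _ | _ | p <;> cases u <;> cases v <;> cases w <;>
    rcases q with _ | _ | q <;> rcases r with _ | r <;>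
    simp [dval, hterm, pival, p2val, sival, s2val, C.d_nm, mul_smul_comm, mul_sub] <;>
    first
    | module
    | (refine (smul_one_cancel' ?_ _).symm
       have hk := C.hk
       have hr : ∀ n : ℕ, ((n:ℚ)+1) ≠ 0 := fun n => by positivity
       field_simp
       try ring)
    | (simp [nm, oddw]; done)

lemma gh_pow (s : ℕ) : C.g * C.h^s = C.h^s * C.g := (((C.ch C.g).symm).pow_right s).eq

lemma fgh (m : ℕ) : C.f*(C.h^m*C.g) = C.h^m*(C.f*C.g) :=
  (((C.ch C.f).symm).pow_right m).left_comm _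

/-- basis-expansion of the generating cocycles -/
def cnm : Bool × Option idxM → A
  | (ε, none) => C.nm (cond ε 1 0) 0 0 false false false
  | (ε, some (.inl _)) => C.nm (cond ε 1 0) 1 0 false false false
  | (ε, some (.inr (.inl n))) => C.nm (cond ε 1 0) 0 n false false true
  | (ε, some (.inr (.inr m))) => C.nm (cond ε 1 0) 1 (m+1) false false false
      - (((m:ℚ)+1) * C.k) • C.nm (cond ε 1 0) 0 m false true true

lemma cElt_eq (i : Bool × Option idxM) : cEltA C.a C.b C.f C.g C.h C.k i = C.cnm i := by
  rcases i with ⟨ε, _ | (_ | n | m)⟩ <;> cases ε <;>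
    simp [cEltA, mEltA, cnm, nm, oddw, C.gh_pow, C.fgh, mul_sub, mul_smul_comm, mul_assoc]

lemma d_cnm (i : Bool × Option idxM) : C.d (C.cnm i) = 0 := by
  rcases i with ⟨ε, _ | (_ | n | m)⟩ <;> cases ε
  all_goals try rcases n with _ | n
  all_goals try rcases m with _ | m
  all_goals
    simp only [cnm, C.d_nm, dval, hterm, map_sub, map_smul, Bool.cond_true, Bool.cond_false,
      map_zero, add_zero, zero_add, pow_zero, pow_one, one_smul, smul_zero, sub_zero,
      smul_smul]
  all_goals module

lemma Pi_cnm (i : Bool × Option idxM) : C.Pi (C.cnm i) = C.cnm i := by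
  rcases i with ⟨ε, _ | (_ | n | m)⟩ <;> cases ε
  all_goals try rcases n with _ | n
  all_goals try rcases m with _ | m
  all_goals
    simp [cnm, pival, p2val, map_sub, map_smul, mul_sub, mul_smul_comm]
  all_goals first | (simp [nm, oddw]; done) | module

/-- leading monomial index of each generating cocycle -/
def lidx : Bool × Option idxM → ((ℕ×ℕ×ℕ)×(Bool×Bool×Bool))
  | (ε, none) => ((cond ε 1 0,0,0),(false,false,false))
  | (ε, some (.inl _)) => ((cond ε 1 0,1,0),(false,false,false))
  | (ε, some (.inr (.inl n))) => ((cond ε 1 0,0,n),(false,false,true))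
  | (ε, some (.inr (.inr m))) => ((cond ε 1 0,1,m+1),(false,false,false))

@[simp] lemma repr_nm (p q r : ℕ) (u v w : Bool) :
    C.bas.repr (C.nm p q r u v w) = Finsupp.single ((p,q,r),(u,v,w)) 1 := by
  rw [← C.bas_eq]; exact C.bas.repr_self _

lemma coord_cnm (i j : Bool × Option idxM) :
    C.bas.coord (lidx j) (C.cnm i) = if i = j then 1 else 0 := by
  rcases i with ⟨ε, _ | (_ | n | m)⟩ <;> rcases j with ⟨ε', _ | (_ | n' | m')⟩ <;>
    cases ε <;> cases ε' <;>
    simp [cnm, lidx, map_sub, map_smul, Module.Basis.coord_apply, Finsupp.single_apply,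
      Prod.mk.injEq, eq_comm] <;>
    simp [Prod.ext_iff]

lemma cnm_li : LinearIndependent ℚ C.cnm := by
  rw [linearIndependent_iff]
  intro l hl
  ext j
  have h3 := congrArg (C.bas.coord (lidx j)) hl
  rw [Finsupp.apply_linearCombination, map_zero] at h3
  rw [Finsupp.linearCombination_apply] at h3
  simp only [Function.comp_apply, C.coord_cnm, smul_eq_mul, mul_ite, mul_one, mul_zero] at h3
  rw [Finsupp.sum_ite_eq'] at h3
  simp only [Finsupp.mem_support_iff, ne_eq, ite_not, ite_eq_left_iff] at h3
  by_cases hj : l j = 0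
  · simpa using hj
  · simpa using h3 hj

lemma homotopy (x : A) : x - C.Pi x = C.d (C.S x) + C.S (C.d x) := by
  have key : (LinearMap.id - C.Pi) = (C.d ∘ₗ C.S + C.S ∘ₗ C.d) := by
    apply C.bas.ext
    rintro ⟨⟨p,q,r⟩,u,v,w⟩
    simp only [LinearMap.sub_apply, LinearMap.id_apply, LinearMap.add_apply,
      LinearMap.comp_apply]
    rw [C.bas_eq, C.Pi_nm, C.S_nm, C.d_nm]
    exact C.homotopy_basis p q r u v w
  have h2 := LinearMap.congr_fun key x
  simpa using h2

lemma mem_range_d {x : A} (hdx : C.d x = 0) (hpx : C.Pi x = 0) :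
    x ∈ LinearMap.range C.d := by
  refine ⟨C.S x, ?_⟩
  have h := C.homotopy x
  rw [hdx, map_zero, add_zero, hpx, sub_zero] at h
  exact h.symm

lemma li_quot : LinearIndependent ℚ
    (fun i => (Submodule.Quotient.mk (cEltA C.a C.b C.f C.g C.h C.k i)
      : A ⧸ LinearMap.range C.d)) := by
  rw [linearIndependent_iff]
  intro l hl
  have hfun : (fun i => (Submodule.Quotient.mk (cEltA C.a C.b C.f C.g C.h C.k i)
      : A ⧸ LinearMap.range C.d)) = (LinearMap.range C.d).mkQ ∘ C.cnm := by
    funext i; rw [Function.comp_apply, C.cElt_eq]; rfl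
  rw [hfun, ← Finsupp.apply_linearCombination] at hl
  rw [Submodule.mkQ_apply, Submodule.Quotient.mk_eq_zero] at hl
  obtain ⟨y, hy⟩ := hl
  have h0 : Finsupp.linearCombination ℚ C.cnm l = 0 := by
    have h1 : C.Pi (Finsupp.linearCombination ℚ C.cnm l)
        = Finsupp.linearCombination ℚ C.cnm l := by
      rw [Finsupp.apply_linearCombination,
        show (⇑C.Pi ∘ C.cnm) = C.cnm from funext fun i => C.Pi_cnm i]
    rw [← h1, ← hy, C.Pi_d]
  exact linearIndependent_iff.mp C.cnm_li l h0

lemma pival_mem (p q r : ℕ) (u v w : Bool) :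
    C.pival p q r u v w ∈ Submodule.span ℚ (Set.range (cEltA C.a C.b C.f C.g C.h C.k)) := by
  have hmem : ∀ i, C.cnm i ∈
      Submodule.span ℚ (Set.range (cEltA C.a C.b C.f C.g C.h C.k)) := fun i =>
    C.cElt_eq i ▸ Submodule.subset_span ⟨i, rfl⟩
  rcases p with _|_|p <;> cases u <;> cases v <;> cases w <;>
    rcases q with _|_|q <;> rcases r with _|r <;>
    simp only [pival, p2val, mul_one, mul_zero] <;>
    first
    | exact Submodule.zero_mem _
    | (simpa [cnm, nm, oddw] using hmem (false, none))
    | (simpa [cnm, nm, oddw] using hmem (true, none))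
    | (simpa [cnm] using hmem (false, some (Sum.inl ())))
    | (simpa [cnm] using hmem (true, some (Sum.inl ())))
    | (simpa [cnm] using hmem (false, some (Sum.inr (Sum.inl _))))
    | (simpa [cnm] using hmem (true, some (Sum.inr (Sum.inl _))))
    | (simpa [cnm] using hmem (false, some (Sum.inr (Sum.inr _))))
    | (simpa [cnm, mul_sub, mul_smul_comm] using hmem (true, some (Sum.inr (Sum.inr _))))

lemma Pi_mem (x : A) :
    C.Pi x ∈ Submodule.span ℚ (Set.range (cEltA C.a C.b C.f C.g C.h C.k)) := by
  have hle : LinearMap.range C.Pi ≤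
      Submodule.span ℚ (Set.range (cEltA C.a C.b C.f C.g C.h C.k)) := by
    rw [Pi, Module.Basis.constr_range]
    refine Submodule.span_le.mpr ?_
    rintro _ ⟨t, rfl⟩
    exact C.pival_mem _ _ _ _ _ _
  exact hle ⟨x, rfl⟩

lemma spanning_coh :
    LinearMap.ker C.d ≤
      Submodule.span ℚ (Set.range (cEltA C.a C.b C.f C.g C.h C.k)) ⊔ LinearMap.range C.d := by
  intro x hx
  have hdx : C.d x = 0 := LinearMap.mem_ker.mp hx
  have h := C.homotopy x
  rw [hdx, map_zero, add_zero] at h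
  have hx2 : x = C.Pi x + C.d (C.S x) := by
    rw [← h]; abel
  rw [hx2]
  exact Submodule.add_mem_sup (C.Pi_mem x) ⟨C.S x, rfl⟩

/-! ## products -/

lemma PBB (s t : ℕ) : (C.b*C.h^s) * (C.b*C.h^t) = C.b*(C.b*C.h^(s+t)) := by
  rw [mul_assoc, ((C.ch C.b).pow_left s).left_comm, ← pow_add]

lemma PBG (s n : ℕ) : (C.b*C.h^s) * (C.h^n*C.g) = C.b*(C.h^(s+n)*C.g) := by
  rw [mul_assoc, ← mul_assoc (C.h^s), ← pow_add]

lemma PGB (n s : ℕ) : (C.h^n*C.g) * (C.b*C.h^s) = C.b*(C.h^(n+s)*C.g) := by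
  rw [mul_assoc, ((C.cb C.g).symm).left_comm, C.gh_pow,
    ((C.ch C.b).pow_left n).left_comm, ← mul_assoc (C.h^n), ← pow_add]

lemma PGG (n m : ℕ) : (C.h^n*C.g)*(C.h^m*C.g) = 0 := by
  rw [mul_assoc, (((C.ch C.g).symm).pow_right m).left_comm, C.gg, mul_zero, mul_zero]

lemma PBV (s m : ℕ) : (C.b*C.h^s)*(C.h^m*(C.f*C.g)) = C.b*(C.h^(s+m)*(C.f*C.g)) := by
  rw [mul_assoc, ← mul_assoc (C.h^s), ← pow_add]

lemma PVB (m s : ℕ) : (C.h^m*(C.f*C.g))*(C.b*C.h^s) = C.b*(C.h^(m+s)*(C.f*C.g)) := by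
  rw [mul_assoc, ((C.cb (C.f*C.g)).symm).left_comm,
    (((C.ch (C.f*C.g)).symm).pow_right s).eq,
    ((C.ch C.b).pow_left m).left_comm, ← mul_assoc (C.h^m), ← pow_add]

lemma PGV (n m : ℕ) : (C.h^n*C.g)*(C.h^m*(C.f*C.g)) = 0 := by
  rw [mul_assoc, (((C.ch C.g).symm).pow_right m).left_comm, C.gfg, mul_zero, mul_zero]

lemma PVG (m n : ℕ) : (C.h^m*(C.f*C.g))*(C.h^n*C.g) = 0 := by
  rw [mul_assoc, (((C.ch (C.f*C.g)).symm).pow_right n).left_comm,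
    mul_assoc C.f, C.gg, mul_zero, mul_zero, mul_zero]

lemma PVV (m n : ℕ) : (C.h^m*(C.f*C.g))*(C.h^n*(C.f*C.g)) = 0 := by
  rw [mul_assoc, (((C.ch (C.f*C.g)).symm).pow_right n).left_comm,
    mul_assoc C.f, C.gfg, mul_zero, mul_zero, mul_zero]

lemma mElt_form (i : idxM) : mEltA C.b C.f C.g C.h C.k i = (match i with
    | .inl _ => C.b*C.h^0
    | .inr (.inl n) => C.h^n*C.g
    | .inr (.inr m) => C.b*C.h^(m+1) - (((m:ℚ)+1)*C.k) • (C.h^m*(C.f*C.g))) := by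
  rcases i with _ | n | m <;> simp [mEltA, C.gh_pow, C.fgh]

@[simp] lemma nmBB' (s : ℕ) : C.nm 0 2 s false false false = C.b*(C.b*C.h^s) := by
  simp [nm, oddw, pow_two, mul_assoc]

@[simp] lemma nmBG' (s : ℕ) : C.nm 0 1 s false false true = C.b*(C.h^s*C.g) := by
  simp [nm, oddw, mul_assoc]

@[simp] lemma nmBV' (s : ℕ) : C.nm 0 1 s false true true = C.b*(C.h^s*(C.f*C.g)) := by
  simp [nm, oddw, mul_assoc]

@[simp] lemma hterm_w_true (p q r : ℕ) (u v : Bool) : C.hterm p q r u v true = 0 := by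
  rcases r with _ | r <;> simp [hterm]

@[simp] lemma hterm_zero (p q : ℕ) (u v w : Bool) : C.hterm p q 0 u v w = 0 := rfl

@[simp] lemma hterm_succ (p q r : ℕ) (u v : Bool) :
    C.hterm p q (r+1) u v false
      = (((r:ℚ)+1) * C.k * (-1)^(cond u 1 0 + cond v 1 0)) • C.nm p (q+1) r u v true := rfl

@[simp] lemma nat_n1 (x y : ℕ) : x + (y+1) = (x+y)+1 := by omega
@[simp] lemma nat_n2 (x y : ℕ) : (x+1) + y = (x+y)+1 := by omega

lemma prod_mem (i j : idxM) :
    mEltA C.b C.f C.g C.h C.k i * mEltA C.b C.f C.g C.h C.k j ∈ LinearMap.range C.d := by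
  rw [C.mElt_form i, C.mElt_form j]
  rcases i with _ | n | m <;> rcases j with _ | n' | m' <;>
    simp only [sub_mul, mul_sub, smul_mul_assoc, mul_smul_comm, smul_smul,
      C.PBB, C.PBG, C.PGB, C.PGG, C.PBV, C.PVB, C.PGV, C.PVG, C.PVV,
      smul_zero, sub_zero, zero_sub, mul_zero, zero_mul, nat_n1, nat_n2,
      Nat.zero_add, Nat.add_zero, ← C.nmBB', ← C.nmBG', ← C.nmBV'] <;>
    apply C.mem_range_d <;>
    simp only [map_sub, map_smul, map_neg, map_zero, C.d_nm, C.Pi_nm, dval, pival,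
      p2val, C.hterm_w_true, C.hterm_zero, C.hterm_succ, nat_n1, nat_n2, Nat.reduceAdd,
      Nat.add_eq, Nat.zero_add, Nat.add_zero,
      Bool.cond_true, Bool.cond_false, zero_add, add_zero, pow_zero, pow_one, one_smul,
      smul_zero, sub_zero, neg_zero, smul_smul] <;>
    first
      | rfl
      | (push_cast; module)

lemma d_cElt (i : Bool × Option idxM) : C.d (cEltA C.a C.b C.f C.g C.h C.k i) = 0 := by
  rw [C.cElt_eq]; exact C.d_cnm i

lemma grade_cElt (i : Bool × Option idxM) :
    cEltA C.a C.b C.f C.g C.h C.k i ∈ gradeLA C.a C.b C.e C.f C.g C.h (degCA i) := by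
  rw [C.cElt_eq]
  rcases i with ⟨ε, _ | (_ | n | m)⟩ <;> cases ε <;> simp only [cnm, Bool.cond_true,
    Bool.cond_false]
  · exact C.nm_mem (by simp [degCA])
  · exact C.nm_mem (by simp [degCA])
  · exact C.nm_mem (by simp [degCA, degMA])
  · exact C.nm_mem (by simp [degCA, degMA])
  · exact C.nm_mem (by simp [degCA, degMA] <;> omega)
  · exact C.nm_mem (by simp [degCA, degMA] <;> omega)
  · exact Submodule.sub_mem _ (C.nm_mem (by simp [degCA, degMA] <;> omega))
      (Submodule.smul_mem _ _ (C.nm_mem (by simp [degCA, degMA] <;> omega)))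
  · exact Submodule.sub_mem _ (C.nm_mem (by simp [degCA, degMA] <;> omega))
      (Submodule.smul_mem _ _ (C.nm_mem (by simp [degCA, degMA] <;> omega)))

lemma bg_mem : C.b * C.g ∈ LinearMap.range C.d :=
  ⟨C.k⁻¹ • C.h, by rw [map_smul, C.hdh, smul_smul, inv_mul_cancel₀ C.hk, one_smul]⟩


end Setup

theorem statement2 {A : Type*} [Ring A] [Algebra ℚ A]
    (a b e f g h : A) (k : ℚ) (hk : k ≠ 0) (d : A →ₗ[ℚ] A)
    (hfree : IsFreeGCA ![a, b, h] ![e, f, g])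
    (hdeg : ∀ (m : ℕ) (x : A), x ∈ gradeLA a b e f g h m → d x ∈ gradeLA a b e f g h (m + 1))
    (hleib : ∀ (m : ℕ) (x y : A), x ∈ gradeLA a b e f g h m →
      d (x * y) = d x * y + ((-1 : ℚ) ^ m) • (x * d y))
    (hda : d a = 0) (hdb : d b = 0) (hdg : d g = 0)
    (hde : d e = a * a) (hdf : d f = b * b) (hdh : d h = k • (b * g)) :
    -- the listed elements are cocycles …
    (∀ i, d (cEltA a b f g h k i) = 0) ∧
    -- … homogeneous of the indicated degrees,
    (∀ i, cEltA a b f g h k i ∈ gradeLA a b e f g h (degCA i)) ∧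
    -- their classes are linearly independent in the cohomology,
    LinearIndependent ℚ
      (fun i => (Submodule.Quotient.mk (cEltA a b f g h k i) : A ⧸ LinearMap.range d)) ∧
    -- and they span the cohomology (so the classes of `a`, `b`, `g·hⁿ`, `βₙ` generate
    -- `H(Λ_A, d)` as a ℚ-algebra);
    (LinearMap.ker d ≤ Submodule.span ℚ (Set.range (cEltA a b f g h k)) ⊔ LinearMap.range d) ∧
    -- the relations `[a]² = 0`, `[b]² = 0`, `[b][g] = 0` hold in cohomology,
    a * a ∈ LinearMap.range d ∧
    b * b ∈ LinearMap.range d ∧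
    b * g ∈ LinearMap.range d ∧
    -- and `ℚ ⊕ M` is square-zero: the product of any two basis elements of `M`
    -- is a coboundary.
    (∀ i j : idxM, mEltA b f g h k i * mEltA b f g h k j ∈ LinearMap.range d) := by
  let C : Setup A := ⟨a, b, e, f, g, h, k, hk, d, hfree, hleib, hda, hdb, hdg, hde, hdf, hdh⟩
  exact ⟨fun i => C.d_cElt i, fun i => C.grade_cElt i, C.li_quot, C.spanning_coh,
    ⟨e, hde⟩, ⟨f, hdf⟩, C.bg_mem, fun i j => C.prod_mem i j⟩
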